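/- Let k ≥ 3 be an integer and L : ℕ → ℕ a function with L(n) ≤ n for all n. Then Σ₁(L(n),k) = 2^{−n} · ∑_{m ≤ n, |m − n/2| < n^{1−4/(3k)}} C(n,m) · (1 + ω_{n,m,k}/C(n,k))^{L(n)} tends to 1 as n → ∞. -/

import Mathlib

open Finset Filter

attribute [local instance] Classical.propDecidable

/-- `ω_{n,m,k} = ∑_{s=0}^{k} (−1)^s C(m,s) C(n−m,k−s)`. -/
def omegaW (n m k : ℕ) : ℤ :=
  ∑ s ∈ Finset.range (k + 1), (-1 : ℤ) ^ s * (m.choose s : ℤ) * ((n - m).choose (k - s) : ℤ)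

section SigmaAux
open Polynomial

lemma coeff_one_sub_X_pow (m s : ℕ) :
    ((1 - X : ℤ[X]) ^ m).coeff s = (-1 : ℤ) ^ s * m.choose s := by
  have h : (1 - X : ℤ[X]) ^ m = C ((-1) ^ m) * (X + C (-1)) ^ m := by
    rw [map_pow, ← mul_pow]
    congr 1
    simp only [map_neg, map_one]
    ring
  rw [h, coeff_C_mul, coeff_X_add_C_pow]
  rcases le_or_gt s m with hs | hs
  · have h2 : (-1:ℤ) ^ m = (-1) ^ (m - s) * (-1) ^ s := by
      rw [← pow_add, Nat.sub_add_cancel hs]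
    rw [h2]
    have hsq : (-1:ℤ) ^ (m - s) * (-1) ^ (m - s) = 1 := by
      rw [← pow_add]; exact Even.neg_one_pow ⟨m - s, rfl⟩
    linear_combination ((-1:ℤ) ^ s * m.choose s) * hsq
  · simp [Nat.choose_eq_zero_of_lt hs]

lemma coeff_one_sub_X_sq_pow (m j : ℕ) :
    ((1 - X ^ 2 : ℤ[X]) ^ m).coeff j =
      if 2 ∣ j then (-1 : ℤ) ^ (j / 2) * m.choose (j / 2) else 0 := by
  have h : (1 - X ^ 2 : ℤ[X]) ^ m = expand ℤ 2 ((1 - X) ^ m) := by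
    rw [map_pow, map_sub, map_one, expand_X]
  rw [h, coeff_expand (by norm_num)]
  split_ifs with hd
  · exact coeff_one_sub_X_pow m (j / 2)
  · rfl

lemma omegaW_eq_coeff (n m k : ℕ) :
    omegaW n m k = ((1 - X : ℤ[X]) ^ m * (1 + X) ^ (n - m)).coeff k := by
  rw [coeff_mul, Finset.Nat.sum_antidiagonal_eq_sum_range_succ_mk]
  refine Finset.sum_congr rfl fun s _ => ?_
  rw [coeff_one_sub_X_pow, coeff_one_add_X_pow]

lemma omegaW_symm (n m k : ℕ) (h : m ≤ n) :
    omegaW n (n - m) k = (-1) ^ k * omegaW n m k := by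
  unfold omegaW
  rw [Nat.sub_sub_self h, Finset.mul_sum]
  rw [← Finset.sum_range_reflect (fun s => (-1:ℤ)^s * ((n-m).choose s : ℤ) * (m.choose (k-s) : ℤ)) (k+1)]
  refine Finset.sum_congr rfl fun s hs => ?_
  rw [Finset.mem_range, Nat.lt_succ_iff] at hs
  obtain ⟨d, rfl⟩ : ∃ d, k = s + d := ⟨k - s, by omega⟩
  have h1 : s + 1 - 1 - s = 0 := by omega
  have h2 : s + d - s = d := by omega
  have h3 : s + d + 1 - 1 - s = d := by omega
  rw [h3, h2]
  have hsq : (-1:ℤ) ^ s * (-1) ^ s = 1 := by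
    rw [← pow_add]; exact Even.neg_one_pow ⟨s, rfl⟩
  have h4 : s + d - d = s := by omega
  rw [h4, pow_add]
  linear_combination (-((-1:ℤ)^d * ((n-m).choose d) * (m.choose s))) * hsq

lemma omegaW_eq_sum (n m k : ℕ) (h : 2 * m ≤ n) :
    omegaW n m k = ∑ j ∈ Finset.range (k+1),
      (if 2 ∣ j then (-1:ℤ) ^ (j/2) * (m.choose (j/2) : ℤ) else 0)
        * ((n - 2*m).choose (k - j) : ℤ) := by
  rw [omegaW_eq_coeff]
  have h1 : (1 - X : ℤ[X]) ^ m * (1 + X) ^ (n - m)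
      = (1 - X ^ 2) ^ m * (1 + X) ^ (n - 2*m) := by
    have hnm : n - m = m + (n - 2*m) := by omega
    have hx : (1 - X : ℤ[X]) * (1 + X) = 1 - X ^ 2 := by ring
    rw [hnm, pow_add, ← mul_assoc, ← mul_pow, hx]
  rw [h1, coeff_mul, Finset.Nat.sum_antidiagonal_eq_sum_range_succ_mk]
  refine Finset.sum_congr rfl fun j _ => ?_
  rw [coeff_one_sub_X_sq_pow, coeff_one_add_X_pow]

lemma abs_omegaW_le (n m k : ℕ) (h : 2 * m ≤ n) :
    |omegaW n m k| ≤ ∑ j ∈ Finset.range (k+1),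
      (m.choose (j/2) : ℤ) * ((n - 2*m).choose (k - j) : ℤ) := by
  rw [omegaW_eq_sum n m k h]
  refine (Finset.abs_sum_le_sum_abs _ _).trans (Finset.sum_le_sum fun j _ => ?_)
  split_ifs with hd
  · rw [abs_mul, abs_mul, abs_pow, abs_neg, abs_one, one_pow, one_mul, Nat.abs_cast, Nat.abs_cast]
  · simp; positivity

lemma variance_sum : ∀ n : ℕ, ∑ m ∈ Finset.range (n+1), (n.choose m : ℤ) * (2*(m:ℤ) - n)^2 = (n:ℤ) * 2^n
  | 0 => by simp
  | (n+1) => by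
    have hchoose : ∑ m ∈ Finset.range (n+1), (n.choose m : ℤ) = 2^n := by
      exact_mod_cast congrArg (fun x : ℕ => (x : ℤ)) (Nat.sum_range_choose n)
    have ih := variance_sum n
    have key := Finset.sum_choose_succ_mul (fun i _ => (2*(i:ℤ) - (n+1))^2) n
    push_cast at key ⊢
    show ∑ x ∈ Finset.range (n+2), ((n+1).choose x : ℤ) * (2*(x:ℤ) - ((n:ℤ)+1))^2 = ((n:ℤ)+1) * 2^(n+1)
    rw [key, ← Finset.sum_add_distrib]
    have comb : ∀ i ∈ Finset.range (n+1),
        (n.choose i : ℤ) * (2*(i:ℤ) - ((n:ℤ)+1))^2 + (n.choose i : ℤ) * (2*((i:ℤ)+1) - ((n:ℤ)+1))^2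
          = 2 * ((n.choose i : ℤ) * (2*(i:ℤ) - n)^2) + 2 * (n.choose i : ℤ) := fun i _ => by ring
    rw [Finset.sum_congr rfl comb, Finset.sum_add_distrib, ← Finset.mul_sum, ← Finset.mul_sum,
      ih, hchoose]
    ring

lemma variance_sum_real (n : ℕ) :
    ∑ m ∈ Finset.range (n+1), (n.choose m : ℝ) * (2*(m:ℝ) - n)^2 = (n:ℝ) * 2^n := by
  have := variance_sum n
  have := congrArg (fun z : ℤ => (z : ℝ)) this
  push_cast at this
  convert this using 2 <;> push_cast <;> ring

lemma tail_bound (n : ℕ) (B : ℝ) (hB : 0 < B) :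
    ∑ m ∈ (Finset.range (n+1)).filter (fun m : ℕ => ¬ |(m:ℝ) - n/2| < B), (n.choose m : ℝ)
      ≤ (n : ℝ) * 2^n / (4 * B^2) := by
  have h1 : ∀ m ∈ (Finset.range (n+1)).filter (fun m : ℕ => ¬ |(m:ℝ) - n/2| < B),
      (n.choose m : ℝ) ≤ (n.choose m : ℝ) * (2*(m:ℝ) - n)^2 / (4 * B^2) := by
    intro m hm
    rw [Finset.mem_filter] at hm
    have h2 : B ≤ |(m:ℝ) - n/2| := not_lt.mp hm.2
    have h3 : 4 * B^2 ≤ (2*(m:ℝ) - n)^2 := by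
      have : B^2 ≤ ((m:ℝ) - n/2)^2 := by
        have := sq_abs ((m:ℝ) - n/2)
        nlinarith [abs_nonneg ((m:ℝ) - n/2)]
      nlinarith
    rw [le_div_iff₀ (by positivity)]
    have hc : (0:ℝ) ≤ (n.choose m : ℝ) := by positivity
    nlinarith
  calc ∑ m ∈ (Finset.range (n+1)).filter (fun m : ℕ => ¬ |(m:ℝ) - n/2| < B), (n.choose m : ℝ)
      ≤ ∑ m ∈ (Finset.range (n+1)).filter (fun m : ℕ => ¬ |(m:ℝ) - n/2| < B),
          (n.choose m : ℝ) * (2*(m:ℝ) - n)^2 / (4 * B^2) := Finset.sum_le_sum h1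
    _ ≤ ∑ m ∈ Finset.range (n+1), (n.choose m : ℝ) * (2*(m:ℝ) - n)^2 / (4 * B^2) := by
        refine Finset.sum_le_sum_of_subset_of_nonneg (Finset.filter_subset _ _) ?_
        intro m _ _; positivity
    _ = (n : ℝ) * 2^n / (4 * B^2) := by
        rw [← Finset.sum_div, variance_sum_real]

lemma omega_bound_half (k n m : ℕ) (hk : 3 ≤ k) (h2 : 2*m ≤ n) (hn : 1 ≤ n)
    (hw : ((n:ℝ) - 2*m) < 2 * (n:ℝ) ^ ((1:ℝ) - 4/(3*(k:ℝ)))) :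
    |(omegaW n m k : ℝ)| ≤ ((k:ℝ)+1) * 2^k * (n:ℝ) ^ ((k:ℝ) - 4/3) := by
  have hk0 : (3:ℝ) ≤ (k:ℝ) := by exact_mod_cast hk
  have hn0 : (1:ℝ) ≤ (n:ℝ) := by exact_mod_cast hn
  have hnpos : (0:ℝ) < (n:ℝ) := by linarith
  set δ : ℝ := 4/(3*(k:ℝ)) with hδ
  have hδhalf : δ ≤ 1/2 := by
    rw [hδ, div_le_div_iff₀ (by linarith) (by norm_num)]; linarith
  have hδk : δ * k = 4/3 := by rw [hδ]; field_simp
  set B : ℝ := (n:ℝ) ^ ((1:ℝ) - δ) with hB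
  have hBpos : 0 < B := Real.rpow_pos_of_pos hnpos _
  have htB : ((n - 2*m : ℕ) : ℝ) ≤ 2 * B := by
    have hcast : ((n - 2*m : ℕ) : ℝ) = (n:ℝ) - 2*m := by
      push_cast [Nat.cast_sub h2]; ring
    rw [hcast]; linarith
  have habsR : |(omegaW n m k : ℝ)| ≤ ∑ j ∈ Finset.range (k+1),
      (m.choose (j/2) : ℝ) * ((n - 2*m).choose (k - j) : ℝ) := by
    have h := (@Int.cast_le ℝ _ _ _).mpr (abs_omegaW_le n m k h2)
    rw [Int.cast_abs] at h
    push_cast at h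
    exact h
  refine habsR.trans ?_
  have hterm : ∀ j ∈ Finset.range (k+1),
      (m.choose (j/2) : ℝ) * ((n - 2*m).choose (k - j) : ℝ)
        ≤ 2^k * (n:ℝ) ^ ((k:ℝ) - 4/3) := by
    intro j hj
    rw [Finset.mem_range, Nat.lt_succ_iff] at hj
    have hc1 : (m.choose (j/2) : ℝ) ≤ (n:ℝ) ^ (j/2 : ℕ) := by
      have h1 : m.choose (j/2) ≤ n ^ (j/2) :=
        (Nat.choose_le_pow m (j/2)).trans (Nat.pow_le_pow_left (by omega) _)
      exact_mod_cast h1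
    have hc2 : ((n - 2*m).choose (k - j) : ℝ) ≤ (2*B) ^ (k - j) := by
      have h1 : ((n - 2*m).choose (k - j) : ℝ) ≤ ((n - 2*m : ℕ) : ℝ) ^ (k - j) := by
        exact_mod_cast Nat.choose_le_pow (n - 2*m) (k - j)
      exact h1.trans (pow_le_pow_left₀ (by positivity) htB _)
    have hprod : (m.choose (j/2) : ℝ) * ((n - 2*m).choose (k - j) : ℝ)
        ≤ (n:ℝ) ^ (j/2 : ℕ) * (2*B) ^ (k - j) := by
      apply mul_le_mul hc1 hc2 (by positivity) (by positivity)
    refine hprod.trans ?_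
    rw [mul_pow, show (n:ℝ) ^ (j/2 : ℕ) * (2 ^ (k-j) * B ^ (k - j)) = 2 ^ (k-j) * ((n:ℝ) ^ (j/2 : ℕ) * B ^ (k - j)) from by ring]
    have hrw : (n:ℝ) ^ (j/2 : ℕ) * B ^ (k - j)
        = (n:ℝ) ^ ((((j/2 : ℕ)) : ℝ) + (1 - δ) * (((k - j : ℕ)) : ℝ)) := by
      rw [Real.rpow_add hnpos, Real.rpow_natCast]
      congr 1
      rw [← Real.rpow_natCast B (k - j), hB, ← Real.rpow_mul (le_of_lt hnpos)]
    have hexp : (((j/2 : ℕ)) : ℝ) + (1 - δ) * (((k - j : ℕ)) : ℝ) ≤ (k:ℝ) - 4/3 := by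
      have ha : (((j/2 : ℕ)) : ℝ) ≤ (j:ℝ)/2 := Nat.cast_div_le
      have hb : (((k - j : ℕ)) : ℝ) = (k:ℝ) - (j:ℝ) := by
        push_cast [Nat.cast_sub hj]; ring
      have hjk : (j:ℝ) ≤ (k:ℝ) := by exact_mod_cast hj
      have hj0 : (0:ℝ) ≤ (j:ℝ) := by positivity
      rw [hb]
      nlinarith [hδk, hδhalf]
    calc 2 ^ (k - j) * ((n:ℝ) ^ (j/2 : ℕ) * B ^ (k - j))
        ≤ 2 ^ k * ((n:ℝ) ^ (j/2 : ℕ) * B ^ (k - j)) := by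
          apply mul_le_mul_of_nonneg_right (pow_le_pow_right₀ one_le_two (Nat.sub_le k j))
          positivity
      _ ≤ 2 ^ k * (n:ℝ) ^ ((k:ℝ) - 4/3) := by
          apply mul_le_mul_of_nonneg_left _ (by positivity)
          rw [hrw]
          exact Real.rpow_le_rpow_of_exponent_le hn0 hexp
    -- fix associativity: hprod gives n^(j/2) * (2*B)^(k-j) = n^(j/2) * (2^(k-j) * B^(k-j))
  have := Finset.sum_le_sum hterm
  refine this.trans ?_
  rw [Finset.sum_const, Finset.card_range, nsmul_eq_mul]
  push_cast
  ring_nf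
  exact le_refl _

lemma omega_bound (k n m : ℕ) (hk : 3 ≤ k) (hm : m ≤ n) (hn : 1 ≤ n)
    (hw : |(m:ℝ) - n/2| < (n:ℝ) ^ ((1:ℝ) - 4/(3*(k:ℝ)))) :
    |(omegaW n m k : ℝ)| ≤ ((k:ℝ)+1) * 2^k * (n:ℝ) ^ ((k:ℝ) - 4/3) := by
  have habs := abs_lt.mp hw
  rcases le_or_gt (2*m) n with h2 | h2
  · exact omega_bound_half k n m hk h2 hn (by push_cast; linarith [habs.1])
  · have hm' : n - m ≤ n := Nat.sub_le n m
    have hsym := omegaW_symm n (n - m) k hm'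
    rw [Nat.sub_sub_self hm] at hsym
    have heq : |(omegaW n m k : ℝ)| = |(omegaW n (n - m) k : ℝ)| := by
      rw [hsym]; push_cast
      rw [abs_mul, abs_pow, abs_neg, abs_one, one_pow, one_mul]
    rw [heq]
    apply omega_bound_half k n (n - m) hk (by omega) hn
    have hc : ((n - m : ℕ):ℝ) = (n:ℝ) - m := by push_cast [Nat.cast_sub hm]; ring
    rw [hc]; push_cast; linarith [habs.2]

lemma choose_lower (k n : ℕ) (h : 2*k ≤ n) :
    ((n:ℝ)/2)^k ≤ (k.factorial : ℝ) * (n.choose k : ℝ) := by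
  have h1 : (n + 1 - k)^k ≤ n.descFactorial k := Nat.pow_sub_le_descFactorial n k
  have h2 : n.descFactorial k = k.factorial * n.choose k :=
    Nat.descFactorial_eq_factorial_mul_choose n k
  have h3 : (n:ℝ)/2 ≤ ((n + 1 - k : ℕ):ℝ) := by
    have hcast : ((n + 1 - k : ℕ):ℝ) = (n:ℝ) + 1 - k := by
      push_cast [Nat.cast_sub (by omega : k ≤ n + 1)]; ring
    have hkn : (2:ℝ) * k ≤ (n:ℝ) := by exact_mod_cast h
    rw [hcast]; linarith
  calc ((n:ℝ)/2)^k ≤ ((n + 1 - k : ℕ):ℝ)^k := by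
        apply pow_le_pow_left₀ (by positivity) h3
    _ ≤ (k.factorial : ℝ) * (n.choose k : ℝ) := by
        have := h1.trans_eq h2
        exact_mod_cast this

lemma eps_bound (k n m : ℕ) (hk : 3 ≤ k) (hm : m ≤ n) (hn : 2*k ≤ n)
    (hw : |(m:ℝ) - n/2| < (n:ℝ) ^ ((1:ℝ) - 4/(3*(k:ℝ)))) :
    |(omegaW n m k : ℝ) / (n.choose k : ℝ)|
      ≤ (((k:ℝ)+1) * 2^k * (k.factorial : ℝ) * 2^k) * (n:ℝ) ^ (-(4:ℝ)/3) := by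
  have hn1 : 1 ≤ n := by omega
  have hnpos : (0:ℝ) < (n:ℝ) := by exact_mod_cast (by omega : 0 < n)
  have hkn : k ≤ n := by omega
  have hcpos : (0:ℝ) < (n.choose k : ℝ) := by exact_mod_cast Nat.choose_pos hkn
  have hL : ((n:ℝ)/2)^k / (k.factorial : ℝ) ≤ (n.choose k : ℝ) := by
    rw [div_le_iff₀ (by positivity)]
    calc ((n:ℝ)/2)^k ≤ (k.factorial : ℝ) * (n.choose k : ℝ) := choose_lower k n hn
      _ = (n.choose k : ℝ) * (k.factorial : ℝ) := by ring
  have hLpos : (0:ℝ) < ((n:ℝ)/2)^k / (k.factorial : ℝ) := by positivity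
  have hA := omega_bound k n m hk hm hn1 hw
  rw [abs_div, abs_of_pos hcpos]
  calc |(omegaW n m k : ℝ)| / (n.choose k : ℝ)
      ≤ (((k:ℝ)+1) * 2^k * (n:ℝ) ^ ((k:ℝ) - 4/3)) / (((n:ℝ)/2)^k / (k.factorial : ℝ)) := by
        apply div_le_div₀ (by positivity) hA hLpos hL
    _ = (((k:ℝ)+1) * 2^k * (k.factorial : ℝ) * 2^k) * (n:ℝ) ^ (-(4:ℝ)/3) := by
        have hrw : (n:ℝ) ^ ((k:ℝ) - 4/3) = (n:ℝ)^(k:ℕ) * (n:ℝ) ^ (-(4:ℝ)/3) := by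
          rw [← Real.rpow_natCast (n:ℝ) k, ← Real.rpow_add hnpos]
          congr 1; ring
        rw [hrw]
        have hnk : (n:ℝ)^(k:ℕ) ≠ 0 := by positivity
        have hkf : (k.factorial : ℝ) ≠ 0 := by positivity
        field_simp
        ring_nf
        rw [mul_assoc, ← mul_pow]; norm_num


end SigmaAux

/-- Claim 1: if `L(n) ≤ n` then `Σ₁(L(n),k) → 1` as `n → ∞`. -/
theorem Sigma1_tendsto_one (k : ℕ) (hk : 3 ≤ k) (L : ℕ → ℕ) (hL : ∀ n, L n ≤ n) :
    Tendsto (fun n : ℕ => (2 : ℝ) ^ (-(n : ℤ)) *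
        ∑ m ∈ (Finset.range (n + 1)).filter
          (fun m : ℕ => |(m : ℝ) - n / 2| < (n : ℝ) ^ ((1 : ℝ) - 4 / (3 * k))),
          (n.choose m : ℝ) * (1 + (omegaW n m k : ℝ) / (n.choose k : ℝ)) ^ L n)
      atTop (nhds 1) := by
  have hk0 : (3:ℝ) ≤ (k:ℝ) := by exact_mod_cast hk
  set D : ℝ := ((k:ℝ)+1) * 2^k * (k.factorial : ℝ) * 2^k with hD
  have hDpos : 0 < D := by positivity
  set ε : ℕ → ℝ := fun n => D * (n:ℝ) ^ (-(4:ℝ)/3) with hε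
  have hεnonneg : ∀ n, 0 ≤ ε n := fun n => by
    rw [hε]; positivity
  set W : ℕ → Finset ℕ := fun n => (Finset.range (n + 1)).filter
      (fun m : ℕ => |(m : ℝ) - n / 2| < (n : ℝ) ^ ((1 : ℝ) - 4 / (3 * k))) with hW
  set P : ℕ → ℝ := fun n => (2:ℝ) ^ (-(n:ℤ)) * ∑ m ∈ W n, (n.choose m : ℝ) with hP
  have hcpos : ∀ n : ℕ, (0:ℝ) < (2:ℝ) ^ (-(n:ℤ)) := fun n => by positivity
  have hcmul : ∀ n : ℕ, (2:ℝ) ^ (-(n:ℤ)) * 2^n = 1 := fun n => by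
    rw [zpow_neg, zpow_natCast]
    field_simp
  have htot : ∀ n : ℕ, ∑ m ∈ Finset.range (n+1), (n.choose m : ℝ) = 2^n := fun n => by
    exact_mod_cast congrArg (fun x : ℕ => (x:ℝ)) (Nat.sum_range_choose n)
  have hP0 : ∀ n, 0 ≤ P n := fun n => by
    rw [hP]
    have : (0:ℝ) ≤ ∑ m ∈ W n, (n.choose m : ℝ) :=
      Finset.sum_nonneg fun m _ => by positivity
    positivity
  have hP_le_one : ∀ n, P n ≤ 1 := by
    intro n
    rw [hP]
    have hsub : ∑ m ∈ W n, (n.choose m : ℝ) ≤ 2^n := by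
      rw [← htot n, hW]
      exact Finset.sum_le_sum_of_subset_of_nonneg (Finset.filter_subset _ _)
        (fun _ _ _ => by positivity)
    calc (2:ℝ) ^ (-(n:ℤ)) * ∑ m ∈ W n, (n.choose m : ℝ)
        ≤ (2:ℝ) ^ (-(n:ℤ)) * 2^n := by
          exact mul_le_mul_of_nonneg_left hsub (hcpos n).le
      _ = 1 := hcmul n
  -- lower bound for P
  have hP_lo : ∀ n : ℕ, 1 ≤ n → 1 - (n:ℝ)^(8/(3*(k:ℝ)) - 1)/4 ≤ P n := by
    intro n hn1
    have hnpos : (0:ℝ) < n := by exact_mod_cast hn1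
    have hBpos : (0:ℝ) < (n:ℝ) ^ ((1:ℝ) - 4/(3*(k:ℝ))) := Real.rpow_pos_of_pos hnpos _
    have htail := tail_bound n ((n:ℝ) ^ ((1:ℝ) - 4/(3*(k:ℝ)))) hBpos
    have hsplit := Finset.sum_filter_add_sum_filter_not (Finset.range (n+1))
      (fun m : ℕ => |(m:ℝ) - n/2| < (n:ℝ) ^ ((1:ℝ) - 4/(3*(k:ℝ)))) (fun m => (n.choose m : ℝ))
    set T : ℝ := ∑ m ∈ (Finset.range (n+1)).filter
      (fun m : ℕ => ¬ |(m:ℝ) - n/2| < (n:ℝ) ^ ((1:ℝ) - 4/(3*(k:ℝ)))), (n.choose m : ℝ) with hT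
    have hT0 : 0 ≤ T := Finset.sum_nonneg fun m _ => by positivity
    have hWsum : ∑ m ∈ W n, (n.choose m : ℝ) = 2^n - T := by
      rw [hW]
      have := hsplit
      rw [htot n] at this
      linarith [this]
    have hBsq : ((n:ℝ) ^ ((1:ℝ) - 4/(3*(k:ℝ))))^2 = (n:ℝ) ^ (2 - 8/(3*(k:ℝ))) := by
      rw [← Real.rpow_natCast ((n:ℝ) ^ ((1:ℝ) - 4/(3*(k:ℝ)))) 2, ← Real.rpow_mul hnpos.le]
      norm_num
      ring_nf
    have hmul : (n:ℝ)^(8/(3*(k:ℝ)) - 1) * ((n:ℝ) ^ ((1:ℝ) - 4/(3*(k:ℝ))))^2 = n := by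
      rw [hBsq, ← Real.rpow_add hnpos,
        show 8/(3*(k:ℝ)) - 1 + (2 - 8/(3*(k:ℝ))) = 1 by ring, Real.rpow_one]
    have hkey : (2:ℝ) ^ (-(n:ℤ)) * ((n:ℝ) * 2^n / (4 * ((n:ℝ) ^ ((1:ℝ) - 4/(3*(k:ℝ))))^2))
        = (n:ℝ)^(8/(3*(k:ℝ)) - 1)/4 := by
      have hBne : ((n:ℝ) ^ ((1:ℝ) - 4/(3*(k:ℝ))))^2 ≠ 0 := by positivity
      calc (2:ℝ) ^ (-(n:ℤ)) * ((n:ℝ) * 2^n / (4 * ((n:ℝ) ^ ((1:ℝ) - 4/(3*(k:ℝ))))^2))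
          = ((2:ℝ) ^ (-(n:ℤ)) * 2^n) * ((n:ℝ) / (4 * ((n:ℝ) ^ ((1:ℝ) - 4/(3*(k:ℝ))))^2)) := by
            ring
        _ = (n:ℝ) / (4 * ((n:ℝ) ^ ((1:ℝ) - 4/(3*(k:ℝ))))^2) := by rw [hcmul n, one_mul]
        _ = (n:ℝ)^(8/(3*(k:ℝ)) - 1)/4 := by
            rw [div_eq_div_iff (by positivity) (by norm_num : (4:ℝ) ≠ 0)]
            linear_combination -4 * hmul
    have hPn : P n = 1 - (2:ℝ) ^ (-(n:ℤ)) * T := by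
      rw [hP]
      simp only
      rw [hWsum, mul_sub, hcmul n]
    rw [hPn, ← hkey]
    have := mul_le_mul_of_nonneg_left htail (hcpos n).le
    linarith [this]
  -- limits
  have hηlt : (0:ℝ) < 1 - 8/(3*(k:ℝ)) := by
    have : 8/(3*(k:ℝ)) ≤ 8/9 := by
      apply div_le_div_of_nonneg_left (by norm_num) (by norm_num) (by linarith)
    linarith
  have hrtend : Tendsto (fun n : ℕ => (n:ℝ)^(8/(3*(k:ℝ)) - 1)) atTop (nhds 0) := by
    have h1 : Tendsto (fun x : ℝ => x ^ (-(1 - 8/(3*(k:ℝ))))) atTop (nhds 0) :=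
      tendsto_rpow_neg_atTop hηlt
    have h2 := h1.comp (tendsto_natCast_atTop_atTop (R := ℝ))
    have heq : (fun n : ℕ => (n:ℝ)^(8/(3*(k:ℝ)) - 1))
        = (fun x : ℝ => x ^ (-(1 - 8/(3*(k:ℝ))))) ∘ (fun n : ℕ => (n:ℝ)) := by
      funext n
      simp only [Function.comp]
      congr 1
      ring
    rw [heq]
    exact h2
  have hPtend : Tendsto P atTop (nhds 1) := by
    apply tendsto_of_tendsto_of_tendsto_of_le_of_le'
      (g := fun n : ℕ => 1 - (n:ℝ)^(8/(3*(k:ℝ)) - 1)/4) (h := fun _ : ℕ => (1:ℝ))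
    · have : Tendsto (fun n : ℕ => 1 - (n:ℝ)^(8/(3*(k:ℝ)) - 1)/4) atTop (nhds (1 - 0/4)) :=
        tendsto_const_nhds.sub (hrtend.div_const 4)
      simpa using this
    · exact tendsto_const_nhds
    · exact (eventually_ge_atTop 1).mono fun n hn => hP_lo n hn
    · exact Eventually.of_forall hP_le_one
  have hnεtend : Tendsto (fun n : ℕ => (n:ℝ) * ε n) atTop (nhds 0) := by
    have h1 : Tendsto (fun x : ℝ => x ^ (-(1:ℝ)/3)) atTop (nhds 0) := by
      have := tendsto_rpow_neg_atTop (y := (1:ℝ)/3) (by norm_num)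
      convert this using 2
      ring_nf
    have h2 := (h1.comp (tendsto_natCast_atTop_atTop (R := ℝ))).const_mul D
    rw [mul_zero] at h2
    apply h2.congr'
    filter_upwards [eventually_ge_atTop 1] with n hn
    have hnpos : (0:ℝ) < n := by exact_mod_cast hn
    simp only [Function.comp, hε]
    rw [show (n:ℝ) * (D * (n:ℝ) ^ (-(4:ℝ)/3)) = D * ((n:ℝ)^(1:ℝ) * (n:ℝ) ^ (-(4:ℝ)/3)) by
      rw [Real.rpow_one]; ring, ← Real.rpow_add hnpos]
    norm_num
  have hεtend : Tendsto ε atTop (nhds 0) := by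
    have h1 : Tendsto (fun x : ℝ => x ^ (-(4:ℝ)/3)) atTop (nhds 0) := by
      have := tendsto_rpow_neg_atTop (y := (4:ℝ)/3) (by norm_num)
      convert this using 2
      ring_nf
    have h2 := (h1.comp (tendsto_natCast_atTop_atTop (R := ℝ))).const_mul D
    rw [mul_zero] at h2
    exact h2
  have hεhalf : ∀ᶠ n : ℕ in atTop, ε n ≤ 1/2 := by
    have := hεtend.eventually_lt_const (show (0:ℝ) < 1/2 by norm_num)
    exact this.mono fun n hn => hn.le
  -- eventual sandwich for the main function
  have hbounds : ∀ᶠ n : ℕ in atTop,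
      (1 - (n:ℝ) * ε n) * P n ≤ ((2 : ℝ) ^ (-(n : ℤ)) *
        ∑ m ∈ W n, (n.choose m : ℝ) * (1 + (omegaW n m k : ℝ) / (n.choose k : ℝ)) ^ L n)
      ∧ ((2 : ℝ) ^ (-(n : ℤ)) *
        ∑ m ∈ W n, (n.choose m : ℝ) * (1 + (omegaW n m k : ℝ) / (n.choose k : ℝ)) ^ L n)
          ≤ Real.exp ((n:ℝ) * ε n) := by
    filter_upwards [eventually_ge_atTop (2*k), hεhalf] with n hn2k hεn
    have hn1 : 1 ≤ n := by omega
    have hfbound : ∀ m ∈ W n,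
        1 - ε n ≤ 1 + (omegaW n m k : ℝ) / (n.choose k : ℝ) ∧
        1 + (omegaW n m k : ℝ) / (n.choose k : ℝ) ≤ 1 + ε n := by
      intro m hm
      rw [hW, Finset.mem_filter, Finset.mem_range, Nat.lt_succ_iff] at hm
      have := eps_bound k n m hk hm.1 hn2k hm.2
      have habs := abs_le.mp (this.trans_eq (by rfl))
      have hεeq : ε n = ((k:ℝ)+1) * 2^k * (k.factorial : ℝ) * 2^k * (n:ℝ) ^ (-(4:ℝ)/3) := rfl
      constructor <;> linarith [habs.1, habs.2, hεeq]
    have hterm : ∀ m ∈ W n,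
        (n.choose m : ℝ) * (1 - ε n)^n ≤
          (n.choose m : ℝ) * (1 + (omegaW n m k : ℝ) / (n.choose k : ℝ)) ^ L n ∧
        (n.choose m : ℝ) * (1 + (omegaW n m k : ℝ) / (n.choose k : ℝ)) ^ L n ≤
          (n.choose m : ℝ) * (1 + ε n)^n := by
      intro m hm
      obtain ⟨hlo, hhi⟩ := hfbound m hm
      have hε1 : 0 ≤ 1 - ε n := by linarith
      have hchoose0 : (0:ℝ) ≤ (n.choose m : ℝ) := by positivity
      constructor
      · apply mul_le_mul_of_nonneg_left _ hchoose0
        calc (1 - ε n)^n ≤ (1 - ε n)^(L n) :=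
              pow_le_pow_of_le_one hε1 (by linarith [hεnonneg n]) (hL n)
          _ ≤ (1 + (omegaW n m k : ℝ) / (n.choose k : ℝ)) ^ L n :=
              pow_le_pow_left₀ hε1 hlo _
      · apply mul_le_mul_of_nonneg_left _ hchoose0
        calc (1 + (omegaW n m k : ℝ) / (n.choose k : ℝ)) ^ L n ≤ (1 + ε n)^(L n) :=
              pow_le_pow_left₀ (by linarith) hhi _
          _ ≤ (1 + ε n)^n :=
              pow_le_pow_right₀ (by linarith [hεnonneg n]) (hL n)
    have hsumlo : (1 - ε n)^n * ∑ m ∈ W n, (n.choose m : ℝ) ≤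
        ∑ m ∈ W n, (n.choose m : ℝ) * (1 + (omegaW n m k : ℝ) / (n.choose k : ℝ)) ^ L n := by
      rw [mul_comm, Finset.sum_mul]
      exact Finset.sum_le_sum fun m hm => (hterm m hm).1
    have hsumhi : ∑ m ∈ W n, (n.choose m : ℝ) * (1 + (omegaW n m k : ℝ) / (n.choose k : ℝ)) ^ L n
        ≤ (1 + ε n)^n * ∑ m ∈ W n, (n.choose m : ℝ) := by
      rw [mul_comm, Finset.sum_mul]
      exact Finset.sum_le_sum fun m hm => (hterm m hm).2
    constructor
    · -- lower
      have h1 : (1 - ε n)^n * P n ≤ (2 : ℝ) ^ (-(n : ℤ)) *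
          ∑ m ∈ W n, (n.choose m : ℝ) * (1 + (omegaW n m k : ℝ) / (n.choose k : ℝ)) ^ L n := by
        rw [hP]
        simp only
        rw [show (1 - ε n)^n * ((2:ℝ) ^ (-(n:ℤ)) * ∑ m ∈ W n, (n.choose m : ℝ))
          = (2:ℝ) ^ (-(n:ℤ)) * ((1 - ε n)^n * ∑ m ∈ W n, (n.choose m : ℝ)) by ring]
        exact mul_le_mul_of_nonneg_left hsumlo (hcpos n).le
      refine le_trans ?_ h1
      apply mul_le_mul_of_nonneg_right _ (hP0 n)
      have := one_add_mul_le_pow (a := -(ε n)) (by linarith [hεnonneg n]) n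
      calc 1 - (n:ℝ) * ε n = 1 + (n:ℝ) * (-(ε n)) := by ring
        _ ≤ (1 + -(ε n))^n := this
        _ = (1 - ε n)^n := by ring_nf
    · -- upper
      have h1 : (2 : ℝ) ^ (-(n : ℤ)) *
          ∑ m ∈ W n, (n.choose m : ℝ) * (1 + (omegaW n m k : ℝ) / (n.choose k : ℝ)) ^ L n
            ≤ (1 + ε n)^n * P n := by
        rw [hP]
        simp only
        rw [show (1 + ε n)^n * ((2:ℝ) ^ (-(n:ℤ)) * ∑ m ∈ W n, (n.choose m : ℝ))
          = (2:ℝ) ^ (-(n:ℤ)) * ((1 + ε n)^n * ∑ m ∈ W n, (n.choose m : ℝ)) by ring]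
        exact mul_le_mul_of_nonneg_left hsumhi (hcpos n).le
      refine h1.trans ?_
      have h2 : (1 + ε n)^n * P n ≤ (1 + ε n)^n := by
        have : (0:ℝ) ≤ (1 + ε n)^n := by positivity
        calc (1 + ε n)^n * P n ≤ (1 + ε n)^n * 1 :=
          mul_le_mul_of_nonneg_left (hP_le_one n) this
          _ = (1 + ε n)^n := mul_one _
      refine h2.trans ?_
      calc (1 + ε n)^n ≤ (Real.exp (ε n))^n := by
            apply pow_le_pow_left₀ (by linarith [hεnonneg n])
            linarith [Real.add_one_le_exp (ε n)]
        _ = Real.exp ((n:ℝ) * ε n) := by rw [← Real.exp_nat_mul]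
  apply tendsto_of_tendsto_of_tendsto_of_le_of_le'
    (g := fun n : ℕ => (1 - (n:ℝ) * ε n) * P n)
    (h := fun n : ℕ => Real.exp ((n:ℝ) * ε n))
  · have : Tendsto (fun n : ℕ => (1 - (n:ℝ) * ε n) * P n) atTop (nhds ((1 - 0) * 1)) :=
      (tendsto_const_nhds.sub hnεtend).mul hPtend
    simpa using this
  · have : Tendsto (fun n : ℕ => Real.exp ((n:ℝ) * ε n)) atTop (nhds (Real.exp 0)) :=
      (Real.continuous_exp.tendsto 0).comp hnεtend
    simpa using this
  · exact hbounds.mono fun n hn => hn.1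
  · exact hbounds.mono fun n hn => hn.2
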